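/- Define, for c ≥ 2/√3, h₁(c) = ∫_{π/3}^{2π/3} (1 − R⁻(c·sin ψ)²)⁻¹ dψ, h₃(c) = ∫_{π/3}^{2π/3} (R⁺(c·sin ψ)² − 1)⁻¹ dψ, and h₂(c) = ∫_{R⁻((√3/2)c)}^{R⁺((√3/2)c)} K(R)/(R·√(c² − K(R)²)) dR. Then lim_{c→∞} h₁(c) = π/3, lim_{c→∞} h₂(c) = π/3, and lim_{c→∞} h₃(c) = 0. -/

import Mathlib

open Real Filter

noncomputable def K (R : ℝ) : ℝ := Real.exp ((R ^ 2 - 1) / 2) / R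

open MeasureTheory Set

lemma K_pos {R : ℝ} (h : 0 < R) : 0 < K R := div_pos (Real.exp_pos _) h

lemma hasDerivAt_K {R : ℝ} (h : R ≠ 0) :
    HasDerivAt K (K R * (R ^ 2 - 1) / R) R := by
  have h1 : HasDerivAt (fun R : ℝ => Real.exp ((R ^ 2 - 1) / 2))
      (Real.exp ((R ^ 2 - 1) / 2) * R) R := by
    have : HasDerivAt (fun R : ℝ => (R ^ 2 - 1) / 2) R R := by
      have := ((hasDerivAt_pow 2 R).sub_const 1).div_const 2
      simpa using this
    exact (Real.hasDerivAt_exp _).comp R this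
  have h2 : HasDerivAt (fun R : ℝ => R) 1 R := hasDerivAt_id R
  have := h1.div h2 h
  refine this.congr_deriv ?_
  unfold K
  field_simp

lemma K_contOn : ContinuousOn K (Set.Ioi 0) := by
  intro x hx
  exact (ContinuousAt.continuousWithinAt (by
    unfold K
    exact (Real.continuous_exp.continuousAt.comp (by fun_prop)).div continuousAt_id (ne_of_gt hx)))

lemma K_anti : StrictAntiOn K (Set.Ioc 0 1) := by
  apply strictAntiOn_of_deriv_neg (convex_Ioc 0 1)
    (K_contOn.mono (by intro x hx; exact hx.1))
  intro x hx
  rw [interior_Ioc] at hx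
  rw [(hasDerivAt_K (ne_of_gt hx.1)).deriv]
  have h1 : K x > 0 := K_pos hx.1
  have h2 : x ^ 2 - 1 < 0 := by nlinarith [hx.1, hx.2]
  have := mul_neg_of_pos_of_neg h1 h2
  exact div_neg_of_neg_of_pos this hx.1

lemma K_mono : StrictMonoOn K (Set.Ici 1) := by
  apply strictMonoOn_of_deriv_pos (convex_Ici 1)
    (K_contOn.mono (by intro x hx; simp at hx ⊢; linarith))
  intro x hx
  rw [interior_Ici] at hx
  have hx1 : (1:ℝ) < x := hx
  rw [(hasDerivAt_K (by positivity)).deriv]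
  have h1 : K x > 0 := K_pos (by linarith)
  have h2 : x ^ 2 - 1 > 0 := by nlinarith
  positivity

lemma hasDerivAt_arcsinK {c R : ℝ} (hc : 0 < c) (hR : 0 < R) (hKc : K R < c) :
    HasDerivAt (fun r => Real.arcsin (K r / c))
      (K R * (R ^ 2 - 1) / (R * Real.sqrt (c ^ 2 - K R ^ 2))) R := by
  have hK0 : 0 < K R := K_pos hR
  have hx0 : 0 < K R / c := by positivity
  have hx1 : K R / c < 1 := (div_lt_one hc).mpr hKc
  have harc := Real.hasDerivAt_arcsin
    (ne_of_gt (by linarith : (-1:ℝ) < K R / c)) (ne_of_lt hx1)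
  have hcomp := harc.comp R ((hasDerivAt_K (ne_of_gt hR)).div_const c)
  refine hcomp.congr_deriv ?_
  have hpos : (0:ℝ) < c ^ 2 - K R ^ 2 := by nlinarith
  have h1 : Real.sqrt (1 - (K R / c) ^ 2) = Real.sqrt (c ^ 2 - K R ^ 2) / c := by
    rw [show 1 - (K R / c) ^ 2 = (c ^ 2 - K R ^ 2) / c ^ 2 by field_simp]
    rw [Real.sqrt_div hpos.le, Real.sqrt_sq hc.le]
  have hs0 : 0 < Real.sqrt (c ^ 2 - K R ^ 2) := Real.sqrt_pos.mpr hpos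
  rw [h1]
  field_simp

lemma aux_mul_le {gv d e : ℝ} (hg : 0 ≤ gv) (hd : 0 < d) (hde : d ≤ e) :
    gv ≤ d⁻¹ * (gv * e) := by
  have h1 : gv * d ≤ gv * e := mul_le_mul_of_nonneg_left hde hg
  calc gv = d⁻¹ * (gv * d) := by field_simp
    _ ≤ d⁻¹ * (gv * e) := mul_le_mul_of_nonneg_left h1 (by positivity)

section inv
variable {Rm Rp : ℝ → ℝ}
  (hRm : ∀ x : ℝ, 1 < x → 0 < Rm x ∧ Rm x < 1 ∧ K (Rm x) = x)
  (hRp : ∀ x : ℝ, 1 < x → 1 < Rp x ∧ K (Rp x) = x)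

include hRm in
lemma Rm_mul (x : ℝ) (hx : 1 < x) : x * Rm x = Real.exp ((Rm x ^ 2 - 1) / 2) := by
  obtain ⟨h0, h1, hK⟩ := hRm x hx
  have h2 : K (Rm x) * Rm x = Real.exp ((Rm x ^ 2 - 1) / 2) := by
    unfold K; field_simp
  rw [hK] at h2
  linarith

include hRm in
lemma Rm_le (x : ℝ) (hx : 1 < x) : Rm x ≤ x⁻¹ := by
  obtain ⟨h0, h1, hK⟩ := hRm x hx
  have h2 := Rm_mul hRm x hx
  have h3 : Real.exp ((Rm x ^ 2 - 1) / 2) ≤ 1 := by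
    apply Real.exp_le_one_iff.mpr
    nlinarith
  rw [inv_eq_one_div, le_div_iff₀ (by linarith)]
  nlinarith

include hRp in
lemma Rp_log (x : ℝ) (hx : 1 < x) : 2 * Real.log x ≤ Rp x ^ 2 - 1 := by
  obtain ⟨h1, hK⟩ := hRp x hx
  have h2 : x * Rp x = Real.exp ((Rp x ^ 2 - 1) / 2) := by
    have h2' : K (Rp x) * Rp x = Real.exp ((Rp x ^ 2 - 1) / 2) := by
      unfold K; field_simp
    rw [hK] at h2'; linarith
  have h3 : x ≤ Real.exp ((Rp x ^ 2 - 1) / 2) := by nlinarith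
  have h4 := (Real.log_le_iff_le_exp (by linarith)).mpr h3
  linarith

include hRm in
lemma Rm_anti : AntitoneOn Rm (Set.Ioi 1) := by
  intro x hx y hy hxy
  simp only [Set.mem_Ioi] at hx hy
  by_contra h
  push_neg at h
  have hmx := hRm x hx
  have hmy := hRm y hy
  have := K_anti ⟨hmx.1, hmx.2.1.le⟩ ⟨hmy.1, hmy.2.1.le⟩ h
  rw [hmx.2.2, hmy.2.2] at this
  linarith [hxy, this]

include hRp in
lemma Rp_mono : MonotoneOn Rp (Set.Ioi 1) := by
  intro x hx y hy hxy
  simp only [Set.mem_Ioi] at hx hy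
  by_contra h
  push_neg at h
  have hpx := hRp x hx
  have hpy := hRp y hy
  have := K_mono (Set.mem_Ici.mpr (hRp y hy).1.le) (Set.mem_Ici.mpr (hRp x hx).1.le) h
  rw [hpx.2, hpy.2] at this
  linarith [hxy, this]

end inv

lemma bdd_intervalIntegrable {f : ℝ → ℝ} (hm : Measurable f) {C a b : ℝ}
    (hb : ∀ x, |f x| ≤ C) : IntervalIntegrable f volume a b := by
  rw [intervalIntegrable_iff]
  exact MeasureTheory.Integrable.mono'
    (MeasureTheory.integrableOn_const measure_Ioc_lt_top.ne)
    hm.aestronglyMeasurable.restrict (Filter.Eventually.of_forall hb)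

lemma sqrt3_gt_one : (1:ℝ) < Real.sqrt 3 := by
  rw [show (1:ℝ) = Real.sqrt 1 by simp]
  exact Real.sqrt_lt_sqrt (by norm_num) (by norm_num)

lemma sin_ge {ψ : ℝ} (h : ψ ∈ Set.Icc (π/3) (2*π/3)) : Real.sqrt 3 / 2 ≤ Real.sin ψ := by
  have h1 : Real.sin ψ = Real.cos (π/2 - ψ) := (Real.cos_pi_div_two_sub ψ).symm
  have h2 : Real.cos (π/2 - ψ) = Real.cos |π/2 - ψ| := (Real.cos_abs _).symm
  have h3 : |π/2 - ψ| ≤ π/6 := by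
    rw [abs_le]
    constructor <;> [linarith [h.2]; linarith [h.1]]
  have h4 := Real.cos_le_cos_of_nonneg_of_le_pi (abs_nonneg (π/2 - ψ))
    (by linarith [Real.pi_pos]) h3
  rw [Real.cos_pi_div_six] at h4
  rw [h1, h2]
  exact h4

lemma pi3_le : π/3 ≤ 2*π/3 := by linarith [Real.pi_pos]

lemma tendsto_t : Filter.Tendsto (fun c : ℝ => Real.sqrt 3 / 2 * c) Filter.atTop Filter.atTop :=
  Filter.Tendsto.const_mul_atTop (by positivity : (0:ℝ) < Real.sqrt 3 / 2) Filter.tendsto_id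

section parts
variable {Rm Rp : ℝ → ℝ}
  (hRm : ∀ x : ℝ, 1 < x → 0 < Rm x ∧ Rm x < 1 ∧ K (Rm x) = x)
  (hRp : ∀ x : ℝ, 1 < x → 1 < Rp x ∧ K (Rp x) = x)

include hRm in
lemma part1_bounds (c : ℝ) (hc : 2 ≤ c) :
    π/3 ≤ (∫ ψ in (π/3)..(2*π/3), (1 - (Rm (c * Real.sin ψ)) ^ 2)⁻¹) ∧
    (∫ ψ in (π/3)..(2*π/3), (1 - (Rm (c * Real.sin ψ)) ^ 2)⁻¹)
      ≤ (1 - ((Real.sqrt 3 / 2 * c)⁻¹) ^ 2)⁻¹ * (π/3) := by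
  set t := Real.sqrt 3 / 2 * c with htdef
  have ht : 1 < t := by nlinarith [sqrt3_gt_one]
  have ht0 : 0 < t := by linarith
  have hc0 : 0 < c := by linarith
  have hx : ∀ ψ ∈ Set.Icc (π/3) (2*π/3), t ≤ c * Real.sin ψ := by
    intro ψ hψ
    have := sin_ge hψ
    rw [htdef]
    nlinarith
  set g : ℝ → ℝ := fun x => (1 - Rm (max x t) ^ 2)⁻¹ with hgdef
  have hmem : ∀ x : ℝ, 1 < max x t := fun x => lt_of_lt_of_le ht (le_max_right x t)
  have hanti : Antitone g := by
    intro x y hxy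
    have hu : 1 < max x t := hmem x
    have hv : 1 < max y t := hmem y
    have huv : max x t ≤ max y t := max_le_max hxy le_rfl
    have hRmle : Rm (max y t) ≤ Rm (max x t) :=
      Rm_anti hRm (Set.mem_Ioi.mpr hu) (Set.mem_Ioi.mpr hv) huv
    obtain ⟨hu0, hu1, -⟩ := hRm _ hu
    obtain ⟨hv0, hv1, -⟩ := hRm _ hv
    have h1 : (0:ℝ) < 1 - Rm (max x t) ^ 2 := by nlinarith
    have h2 : 1 - Rm (max x t) ^ 2 ≤ 1 - Rm (max y t) ^ 2 := by nlinarith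
    exact inv_anti₀ h1 h2
  have hbound : ∀ x, 1 ≤ g x ∧ g x ≤ (1 - (t⁻¹) ^ 2)⁻¹ := by
    intro x
    have hu : 1 < max x t := hmem x
    obtain ⟨hu0, hu1, -⟩ := hRm _ hu
    have hle : Rm (max x t) ≤ t⁻¹ := by
      refine le_trans (Rm_le hRm _ hu) ?_
      exact inv_anti₀ ht0 (le_max_right x t)
    have htinv : t⁻¹ < 1 := by
      rw [inv_lt_one_iff₀]; right; exact ht
    have htinv0 : 0 < t⁻¹ := by positivity
    have h1 : (0:ℝ) < 1 - Rm (max x t) ^ 2 := by nlinarith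
    have h2 : 1 - Rm (max x t) ^ 2 ≤ 1 := by nlinarith
    constructor
    · have := inv_anti₀ h1 h2
      simpa using this
    · exact inv_anti₀ (by nlinarith) (by nlinarith)
  have hC0 : (1:ℝ) ≤ (1 - (t⁻¹) ^ 2)⁻¹ := le_trans (hbound 0).1 (hbound 0).2
  have habs : ∀ x, |g (c * Real.sin x)| ≤ (1 - (t⁻¹) ^ 2)⁻¹ := fun x =>
    abs_le.mpr ⟨by linarith [(hbound (c * Real.sin x)).1], (hbound _).2⟩
  have hmeasg : Measurable g := hanti.measurable
  have hint : IntervalIntegrable (fun ψ => g (c * Real.sin ψ)) volume (π/3) (2*π/3) :=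
    bdd_intervalIntegrable (hmeasg.comp (by fun_prop)) habs
  have hcongr : (∫ ψ in (π/3)..(2*π/3), (1 - (Rm (c * Real.sin ψ)) ^ 2)⁻¹)
      = ∫ ψ in (π/3)..(2*π/3), g (c * Real.sin ψ) := by
    apply intervalIntegral.integral_congr
    intro ψ hψ
    rw [Set.uIcc_of_le pi3_le] at hψ
    simp only [hgdef]
    rw [max_eq_left (hx ψ hψ)]
  rw [hcongr]
  constructor
  · have h1 : (∫ _ψ in (π/3)..(2*π/3), (1:ℝ)) ≤ ∫ ψ in (π/3)..(2*π/3), g (c * Real.sin ψ) := by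
      apply intervalIntegral.integral_mono_on pi3_le intervalIntegrable_const hint
      intro ψ _
      exact (hbound _).1
    rw [intervalIntegral.integral_const] at h1
    rw [smul_eq_mul] at h1
    linarith
  · have h1 : (∫ ψ in (π/3)..(2*π/3), g (c * Real.sin ψ))
        ≤ ∫ _ψ in (π/3)..(2*π/3), (1 - (t⁻¹) ^ 2)⁻¹ := by
      apply intervalIntegral.integral_mono_on pi3_le hint intervalIntegrable_const
      intro ψ _
      exact (hbound _).2
    rw [intervalIntegral.integral_const, smul_eq_mul] at h1
    calc (∫ ψ in (π/3)..(2*π/3), g (c * Real.sin ψ))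
        ≤ (2*π/3 - π/3) * (1 - (t⁻¹) ^ 2)⁻¹ := h1
      _ = (1 - (t⁻¹) ^ 2)⁻¹ * (π/3) := by ring

include hRm in
lemma part1 : Filter.Tendsto (fun c : ℝ => ∫ ψ in (π / 3)..(2 * π / 3),
    (1 - (Rm (c * Real.sin ψ)) ^ 2)⁻¹) Filter.atTop (nhds (π / 3)) := by
  have hub : Filter.Tendsto (fun c : ℝ => (1 - ((Real.sqrt 3 / 2 * c)⁻¹) ^ 2)⁻¹ * (π/3))
      Filter.atTop (nhds (π/3)) := by
    have h0 : Filter.Tendsto (fun c : ℝ => (Real.sqrt 3 / 2 * c)⁻¹) Filter.atTop (nhds 0) :=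
      tendsto_t.inv_tendsto_atTop
    have h1 : ContinuousAt (fun y : ℝ => (1 - y ^ 2)⁻¹ * (π/3)) 0 := by
      apply ContinuousAt.mul _ continuousAt_const
      exact ContinuousAt.inv₀ (by fun_prop) (by norm_num)
    have := h1.tendsto.comp h0
    simpa [Function.comp_def] using this
  apply tendsto_of_tendsto_of_tendsto_of_le_of_le' (tendsto_const_nhds) hub
  · filter_upwards [Filter.eventually_ge_atTop (2:ℝ)] with c hc
    exact (part1_bounds hRm c hc).1
  · filter_upwards [Filter.eventually_ge_atTop (2:ℝ)] with c hc
    exact (part1_bounds hRm c hc).2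

include hRp in
lemma part3_bounds (c : ℝ) (hc : 2 ≤ c) :
    0 ≤ (∫ ψ in (π/3)..(2*π/3), ((Rp (c * Real.sin ψ)) ^ 2 - 1)⁻¹) ∧
    (∫ ψ in (π/3)..(2*π/3), ((Rp (c * Real.sin ψ)) ^ 2 - 1)⁻¹)
      ≤ (2 * Real.log (Real.sqrt 3 / 2 * c))⁻¹ * (π/3) := by
  set t := Real.sqrt 3 / 2 * c with htdef
  have ht : 1 < t := by nlinarith [sqrt3_gt_one]
  have ht0 : 0 < t := by linarith
  have hc0 : 0 < c := by linarith
  have hlogt : 0 < Real.log t := Real.log_pos ht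
  have hx : ∀ ψ ∈ Set.Icc (π/3) (2*π/3), t ≤ c * Real.sin ψ := by
    intro ψ hψ
    have := sin_ge hψ
    rw [htdef]
    nlinarith
  set g : ℝ → ℝ := fun x => ((Rp (max x t)) ^ 2 - 1)⁻¹ with hgdef
  have hmem : ∀ x : ℝ, 1 < max x t := fun x => lt_of_lt_of_le ht (le_max_right x t)
  have hpos : ∀ x : ℝ, 2 * Real.log t ≤ Rp (max x t) ^ 2 - 1 := by
    intro x
    refine le_trans ?_ (Rp_log hRp _ (hmem x))
    have : Real.log t ≤ Real.log (max x t) :=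
      Real.log_le_log ht0 (le_max_right x t)
    linarith
  have hanti : Antitone g := by
    intro x y hxy
    have hu : 1 < max x t := hmem x
    have hv : 1 < max y t := hmem y
    have huv : max x t ≤ max y t := max_le_max hxy le_rfl
    have hRple : Rp (max x t) ≤ Rp (max y t) :=
      Rp_mono hRp (Set.mem_Ioi.mpr hu) (Set.mem_Ioi.mpr hv) huv
    have hu1 := (hRp _ hu).1
    have hv1 := (hRp _ hv).1
    have h1 : (0:ℝ) < Rp (max x t) ^ 2 - 1 := by nlinarith
    exact inv_anti₀ h1 (by nlinarith)
  have hbound : ∀ x, 0 ≤ g x ∧ g x ≤ (2 * Real.log t)⁻¹ := by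
    intro x
    have h1 : (0:ℝ) < Rp (max x t) ^ 2 - 1 := lt_of_lt_of_le (by positivity) (hpos x)
    exact ⟨by positivity, inv_anti₀ (by positivity) (hpos x)⟩
  have habs : ∀ x, |g (c * Real.sin x)| ≤ (2 * Real.log t)⁻¹ := fun x =>
    abs_le.mpr ⟨by linarith [(hbound (c * Real.sin x)).1, (hbound (c * Real.sin x)).2,
      inv_nonneg.mpr (le_of_lt (by positivity : (0:ℝ) < 2 * Real.log t))], (hbound _).2⟩
  have hint : IntervalIntegrable (fun ψ => g (c * Real.sin ψ)) volume (π/3) (2*π/3) :=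
    bdd_intervalIntegrable (hanti.measurable.comp (by fun_prop)) habs
  have hcongr : (∫ ψ in (π/3)..(2*π/3), ((Rp (c * Real.sin ψ)) ^ 2 - 1)⁻¹)
      = ∫ ψ in (π/3)..(2*π/3), g (c * Real.sin ψ) := by
    apply intervalIntegral.integral_congr
    intro ψ hψ
    rw [Set.uIcc_of_le pi3_le] at hψ
    simp only [hgdef]
    rw [max_eq_left (hx ψ hψ)]
  rw [hcongr]
  constructor
  · apply intervalIntegral.integral_nonneg pi3_le
    intro ψ _
    exact (hbound _).1
  · have h1 : (∫ ψ in (π/3)..(2*π/3), g (c * Real.sin ψ))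
        ≤ ∫ _ψ in (π/3)..(2*π/3), (2 * Real.log t)⁻¹ := by
      apply intervalIntegral.integral_mono_on pi3_le hint intervalIntegrable_const
      intro ψ _
      exact (hbound _).2
    rw [intervalIntegral.integral_const, smul_eq_mul] at h1
    calc (∫ ψ in (π/3)..(2*π/3), g (c * Real.sin ψ))
        ≤ (2*π/3 - π/3) * (2 * Real.log t)⁻¹ := h1
      _ = (2 * Real.log t)⁻¹ * (π/3) := by ring

include hRp in
lemma part3 : Filter.Tendsto (fun c : ℝ => ∫ ψ in (π / 3)..(2 * π / 3),
    ((Rp (c * Real.sin ψ)) ^ 2 - 1)⁻¹) Filter.atTop (nhds 0) := by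
  have hub : Filter.Tendsto (fun c : ℝ => (2 * Real.log (Real.sqrt 3 / 2 * c))⁻¹ * (π/3))
      Filter.atTop (nhds 0) := by
    have h0 : Filter.Tendsto (fun c : ℝ => 2 * Real.log (Real.sqrt 3 / 2 * c))
        Filter.atTop Filter.atTop :=
      Filter.Tendsto.const_mul_atTop two_pos (Real.tendsto_log_atTop.comp tendsto_t)
    have := h0.inv_tendsto_atTop.mul_const (π/3)
    simpa using this
  apply tendsto_of_tendsto_of_tendsto_of_le_of_le' (tendsto_const_nhds) hub
  · filter_upwards [Filter.eventually_ge_atTop (2:ℝ)] with c hc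
    exact (part3_bounds hRp c hc).1
  · filter_upwards [Filter.eventually_ge_atTop (2:ℝ)] with c hc
    exact (part3_bounds hRp c hc).2


lemma arith1 {x u : ℝ} (hx : 0 ≤ x) : -(x * (u^2 - 1)) ≤ x := by
  nlinarith [mul_nonneg hx (sq_nonneg u)]

lemma arith2 {B r : ℝ} (hB : 0 ≤ B) (hr : 0 ≤ r) (h : r ≤ 1) : (1 - r) * B ≤ B := by
  nlinarith

lemma arith3 {r : ℝ} (h0 : 0 < r) (hh : r ≤ 1/2) : 0 < 1 - r^2 := by nlinarith

lemma r1_gt_one {r₁ ε : ℝ} (hε : 0 < ε) (hsq : r₁^2 = 1 + 8/ε) (hnn : 0 ≤ r₁) : 1 < r₁ := by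
  nlinarith [div_pos (by norm_num : (0:ℝ) < 8) hε]

lemma lt_of_sq_lt_sq'' {x y : ℝ} (hy : 0 ≤ y) (h : x^2 < y^2) : x < y := by
  by_contra hc
  push_neg at hc
  exact absurd h (not_lt.mpr (pow_le_pow_left₀ hy hc 2))

lemma a_facts {c : ℝ} (hc : 2 ≤ c) :
    1 < Real.sqrt 3/2*c ∧ Real.sqrt 3/2*c < c ∧ (Real.sqrt 3/2*c)^2 = 3/4*c^2 := by
  have h1 := sqrt3_gt_one
  have h2 : Real.sqrt 3 < 2 := by
    nlinarith [Real.sq_sqrt (by norm_num : (0:ℝ) ≤ 3), Real.sqrt_nonneg 3]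
  refine ⟨by nlinarith, by nlinarith, ?_⟩
  rw [mul_pow, div_pow, Real.sq_sqrt (by norm_num : (0:ℝ) ≤ 3)]
  ring

lemma numeric1 {r₀ ε : ℝ} (h0 : 0 < r₀) (hh : r₀ ≤ 1/2) (he : r₀ ≤ ε/12) :
    (1 - r₀^2)⁻¹ * (π/3) ≤ π/3 + ε/4 := by
  have hd : 0 < 1 - r₀^2 := arith3 h0 hh
  have hi : (1 - r₀^2)⁻¹ ≤ 1 + 2*r₀ := by
    rw [inv_eq_one_div, div_le_iff₀ hd]
    nlinarith
  have h1 : (1 - r₀^2)⁻¹ * (π/3) ≤ (1 + 2*r₀) * (π/3) :=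
    mul_le_mul_of_nonneg_right hi (by positivity)
  have h2 : r₀ * π ≤ (ε/12) * 4 :=
    mul_le_mul he Real.pi_le_four Real.pi_pos.le (by linarith)
  nlinarith [h1, h2, Real.pi_pos]

lemma numeric4 {r₁ ε : ℝ} (hε : 0 < ε) (hsq : r₁^2 = 1 + 8/ε) :
    (r₁^2 - 1)⁻¹ * (π/3) ≤ ε/6 := by
  have h : (r₁^2 - 1)⁻¹ = ε/8 := by
    rw [show r₁^2 - 1 = 8/ε by rw [hsq]; ring, inv_div]
  rw [h]
  nlinarith [mul_le_mul_of_nonneg_left Real.pi_le_four hε.le, Real.pi_pos]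

set_option maxHeartbeats 1000000 in
include hRm hRp in
lemma part2 : Filter.Tendsto (fun c : ℝ =>
    ∫ R in (Rm (Real.sqrt 3 / 2 * c))..(Rp (Real.sqrt 3 / 2 * c)),
      K R / (R * Real.sqrt (c ^ 2 - (K R) ^ 2))) Filter.atTop (nhds (π / 3)) := by
  rw [Metric.tendsto_nhds]
  intro ε hε
  set r₀ : ℝ := min (ε/12) (1/2) with hr₀def
  have hr₀pos : 0 < r₀ := lt_min (by linarith) (by norm_num)
  have hr₀half : r₀ ≤ 1/2 := min_le_right _ _
  have hr₀eps : r₀ ≤ ε/12 := min_le_left _ _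
  have hr₀lt1 : r₀ < 1 := by linarith
  set r₁ : ℝ := Real.sqrt (1 + 8/ε) with hr₁def
  have hr₁sq : r₁ ^ 2 = 1 + 8/ε := Real.sq_sqrt (by positivity)
  have hr₁gt1 : 1 < r₁ := r1_gt_one hε hr₁sq (Real.sqrt_nonneg _)
  have E3' : Filter.Tendsto (fun c : ℝ => 1 + 2 * Real.log (Real.sqrt 3 / 2 * c))
      Filter.atTop Filter.atTop :=
    Filter.tendsto_atTop_add_const_left _ 1
      (Filter.Tendsto.const_mul_atTop two_pos (Real.tendsto_log_atTop.comp tendsto_t))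
  have E4' : Filter.Tendsto (fun c : ℝ => Real.arcsin c⁻¹) Filter.atTop (nhds 0) := by
    have h := (Real.continuous_arcsin.tendsto 0).comp tendsto_inv_atTop_zero
    simpa [Function.comp_def] using h
  have E5' : Filter.Tendsto (fun c : ℝ => 2 * K r₀ / (r₀ * c)) Filter.atTop (nhds 0) :=
    Filter.Tendsto.div_atTop tendsto_const_nhds
      (Filter.Tendsto.const_mul_atTop hr₀pos Filter.tendsto_id)
  have E6' : Filter.Tendsto (fun c : ℝ => (r₁ - 1) * (2 * K r₁ / c)) Filter.atTop (nhds 0) := by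
    have h := (Filter.Tendsto.div_atTop (tendsto_const_nhds (x := 2 * K r₁))
      Filter.tendsto_id).const_mul (r₁ - 1)
    simpa using h
  filter_upwards [Filter.eventually_ge_atTop (2:ℝ),
    tendsto_t.inv_tendsto_atTop.eventually_lt_const hr₀pos,
    E3'.eventually_gt_atTop (r₁ ^ 2),
    E4'.eventually_lt_const hε,
    E5'.eventually_lt_const (by linarith : (0:ℝ) < ε/4),
    E6'.eventually_lt_const (by linarith : (0:ℝ) < ε/4)] with c hc1 hc2 hc3 hc4 hc5 hc6
  have hc0 : 0 < c := by linarith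
  set a := Real.sqrt 3 / 2 * c with hadef
  obtain ⟨ha1, hac, ha2⟩ := a_facts hc1
  rw [← hadef] at ha1 hac ha2
  have ha0 : 0 < a := by linarith
  set ρ := Rm a with hρdef
  set P := Rp a with hPdef
  obtain ⟨hρ0, hρ1, hKρ⟩ := hRm a ha1
  obtain ⟨hP1, hKP⟩ := hRp a ha1
  have hρr₀ : ρ < r₀ := lt_of_le_of_lt (Rm_le hRm a ha1) hc2
  have hPr₁ : r₁ < P := by
    have h2 := Rp_log hRp a ha1
    exact lt_of_sq_lt_sq'' (by linarith) (by linarith)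
  have hρP : ρ ≤ P := by linarith
  have hKle : ∀ R ∈ Set.Icc ρ P, K R ≤ a := by
    intro R hR
    rcases le_or_gt R 1 with h | h
    · have := K_anti.antitoneOn ⟨hρ0, hρ1.le⟩ ⟨lt_of_lt_of_le hρ0 hR.1, h⟩ hR.1
      rwa [hKρ] at this
    · have := K_mono.monotoneOn (Set.mem_Ici.mpr h.le) (Set.mem_Ici.mpr hP1.le) hR.2
      rwa [hKP] at this
  have hRpos : ∀ R ∈ Set.Icc ρ P, 0 < R := fun R hR => lt_of_lt_of_le hρ0 hR.1
  have hsub : ∀ R ∈ Set.Icc ρ P, c/2 ≤ Real.sqrt (c^2 - K R^2) := by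
    intro R hR
    have h1 : 0 < K R := K_pos (hRpos R hR)
    have h2 : K R ≤ a := hKle R hR
    rw [show c/2 = Real.sqrt ((c/2)^2) by rw [Real.sqrt_sq (by linarith)]]
    apply Real.sqrt_le_sqrt
    have hsq : K R^2 ≤ a^2 := pow_le_pow_left₀ h1.le h2 2
    linarith [hsq, ha2]
  set g : ℝ → ℝ := fun R => K R / (R * Real.sqrt (c^2 - K R^2)) with hgdef
  set G : ℝ → ℝ := fun R => K R * (R^2 - 1) / (R * Real.sqrt (c^2 - K R^2)) with hGdef
  have hGg : ∀ R, G R = g R * (R^2 - 1) := fun R => (div_mul_eq_mul_div _ _ _).symm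
  have hg0 : ∀ R ∈ Set.Icc ρ P, 0 ≤ g R := fun R hR =>
    div_nonneg (K_pos (hRpos R hR)).le (mul_nonneg (hRpos R hR).le (Real.sqrt_nonneg _))
  have hKcont : ContinuousOn K (Set.Icc ρ P) := K_contOn.mono (fun x hx => hRpos x hx)
  have hgcont : ContinuousOn g (Set.Icc ρ P) := by
    apply hKcont.div
    · exact continuousOn_id.mul
        (Real.continuous_sqrt.comp_continuousOn (continuousOn_const.sub (hKcont.pow 2)))
    · intro x hx
      have h1 := hsub x hx
      have h2 := hRpos x hx
      exact ne_of_gt (mul_pos h2 (lt_of_lt_of_le (by linarith) h1))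
  have hGcont : ContinuousOn G (Set.Icc ρ P) := by
    have h1 : ContinuousOn (fun R : ℝ => R^2 - 1) (Set.Icc ρ P) := by fun_prop
    exact (hgcont.mul h1).congr (fun x _ => hGg x)
  set F : ℝ → ℝ := fun R => Real.arcsin (K R / c) with hFdef
  have hsubset : ∀ s t, s ∈ Set.Icc ρ P → t ∈ Set.Icc ρ P → Set.uIcc s t ⊆ Set.Icc ρ P := by
    intro s t hs ht
    rw [← Set.uIcc_of_le hρP]
    exact Set.uIcc_subset_uIcc (by rwa [Set.uIcc_of_le hρP]) (by rwa [Set.uIcc_of_le hρP])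
  have hFTC : ∀ s t, s ∈ Set.Icc ρ P → t ∈ Set.Icc ρ P →
      (∫ R in s..t, G R) = F t - F s := by
    intro s t hs ht
    apply intervalIntegral.integral_eq_sub_of_hasDerivAt
    · intro x hx
      have hxm := hsubset s t hs ht hx
      exact hasDerivAt_arcsinK hc0 (hRpos x hxm) (lt_of_le_of_lt (hKle x hxm) hac)
    · exact (hGcont.mono (hsubset s t hs ht)).intervalIntegrable
  have hgint : ∀ s t, s ∈ Set.Icc ρ P → t ∈ Set.Icc ρ P →
      IntervalIntegrable g volume s t := fun s t hs ht =>
    (hgcont.mono (hsubset s t hs ht)).intervalIntegrable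
  have hGint : ∀ s t, s ∈ Set.Icc ρ P → t ∈ Set.Icc ρ P →
      IntervalIntegrable G volume s t := fun s t hs ht =>
    (hGcont.mono (hsubset s t hs ht)).intervalIntegrable
  have m_ρ : ρ ∈ Set.Icc ρ P := ⟨le_refl _, hρP⟩
  have m_r₀ : r₀ ∈ Set.Icc ρ P := ⟨hρr₀.le, by linarith⟩
  have m_1 : (1:ℝ) ∈ Set.Icc ρ P := ⟨hρ1.le, hP1.le⟩
  have m_r₁ : r₁ ∈ Set.Icc ρ P := ⟨by linarith, hPr₁.le⟩
  have m_P : P ∈ Set.Icc ρ P := ⟨hρP, le_refl _⟩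
  have harcsin : Real.arcsin (Real.sqrt 3 / 2) = π / 3 := by
    rw [← Real.sin_pi_div_three, Real.arcsin_sin (by linarith [Real.pi_pos])
      (by linarith [Real.pi_pos])]
  have hdivac : a / c = Real.sqrt 3 / 2 := by
    rw [hadef, mul_div_assoc, div_self (ne_of_gt hc0), mul_one]
  have hFρ : F ρ = π/3 := by
    show Real.arcsin (K ρ / c) = π/3
    rw [hKρ, hdivac, harcsin]
  have hFP : F P = π/3 := by
    show Real.arcsin (K P / c) = π/3
    rw [hKP, hdivac, harcsin]
  have hF1 : F 1 = Real.arcsin c⁻¹ := by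
    show Real.arcsin (K 1 / c) = Real.arcsin c⁻¹
    norm_num [K]
  have hF0 : ∀ R ∈ Set.Icc ρ P, 0 ≤ F R := fun R hR =>
    Real.arcsin_nonneg.mpr (div_nonneg (K_pos (hRpos R hR)).le hc0.le)
  -- splitting
  have h1 := intervalIntegral.integral_add_adjacent_intervals
    (hgint ρ r₀ m_ρ m_r₀) (hgint r₀ 1 m_r₀ m_1)
  have h2 := intervalIntegral.integral_add_adjacent_intervals
    (hgint ρ 1 m_ρ m_1) (hgint 1 r₁ m_1 m_r₁)
  have h3 := intervalIntegral.integral_add_adjacent_intervals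
    (hgint ρ r₁ m_ρ m_r₁) (hgint r₁ P m_r₁ m_P)
  have h4 := intervalIntegral.integral_add_adjacent_intervals
    (hgint ρ 1 m_ρ m_1) (hgint 1 P m_1 m_P)
  -- lower bound
  have hlow : π/3 - Real.arcsin c⁻¹ ≤ ∫ R in ρ..P, g R := by
    have hnn : 0 ≤ ∫ R in (1:ℝ)..P, g R := by
      apply intervalIntegral.integral_nonneg hP1.le
      intro u hu
      exact hg0 u ⟨le_trans hρ1.le hu.1, hu.2⟩
    have hmono : (∫ R in ρ..(1:ℝ), (-G) R) ≤ ∫ R in ρ..(1:ℝ), g R := by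
      apply intervalIntegral.integral_mono_on hρ1.le (hGint ρ 1 m_ρ m_1).neg
        (hgint ρ 1 m_ρ m_1)
      intro u hu
      have hum : u ∈ Set.Icc ρ P := ⟨hu.1, le_trans hu.2 hP1.le⟩
      have h0 := hg0 u hum
      rw [Pi.neg_apply, hGg]
      exact arith1 h0
    have heq : (∫ R in ρ..(1:ℝ), (-G) R) = F ρ - F 1 := by
      simp only [Pi.neg_apply]
      rw [intervalIntegral.integral_neg, hFTC ρ 1 m_ρ m_1]; ring
    rw [heq, hFρ, hF1] at hmono
    linarith
  -- upper bound piece 1 : [ρ, r₀]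
  have hd₀ : (0:ℝ) < 1 - r₀^2 := arith3 hr₀pos hr₀half
  have hU1 : (∫ R in ρ..r₀, g R) ≤ (1 - r₀^2)⁻¹ * (π/3) := by
    have hpt : ∀ u ∈ Set.Icc ρ r₀, g u ≤ ((1 - r₀^2)⁻¹ • (-G)) u := by
      intro u hu
      have hum : u ∈ Set.Icc ρ P := ⟨hu.1, le_trans hu.2 (by linarith)⟩
      have h0 := hg0 u hum
      have hu0 : 0 ≤ u := (hRpos u hum).le
      have h3' : u^2 ≤ r₀^2 := pow_le_pow_left₀ hu0 hu.2 2
      have := aux_mul_le h0 hd₀ (by linarith : 1 - r₀^2 ≤ 1 - u^2)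
      calc g u ≤ (1 - r₀^2)⁻¹ * (g u * (1 - u^2)) := this
        _ = ((1 - r₀^2)⁻¹ • (-G)) u := by
            simp only [Pi.smul_apply, Pi.neg_apply, smul_eq_mul]
            rw [hGg]; ring
    have hmono := intervalIntegral.integral_mono_on hρr₀.le (hgint ρ r₀ m_ρ m_r₀)
      (((hGint ρ r₀ m_ρ m_r₀).neg).const_mul _) hpt
    rw [intervalIntegral.integral_const_mul] at hmono
    simp only [Pi.neg_apply] at hmono
    rw [intervalIntegral.integral_neg, hFTC ρ r₀ m_ρ m_r₀] at hmono
    have hb : -(F r₀ - F ρ) ≤ π/3 := by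
      rw [hFρ]; linarith [hF0 r₀ m_r₀]
    calc (∫ R in ρ..r₀, g R) ≤ (1 - r₀^2)⁻¹ * -(F r₀ - F ρ) := hmono
      _ ≤ (1 - r₀^2)⁻¹ * (π/3) := mul_le_mul_of_nonneg_left hb (inv_pos.mpr hd₀).le
  -- upper bound piece 2 : [r₀, 1]
  have hU2 : (∫ R in r₀..(1:ℝ), g R) ≤ 2 * K r₀ / (r₀ * c) := by
    have hpt : ∀ u ∈ Set.Icc r₀ 1, g u ≤ 2 * K r₀ / (r₀ * c) := by
      intro u hu
      have hum : u ∈ Set.Icc ρ P := ⟨le_trans hρr₀.le hu.1, le_trans hu.2 hP1.le⟩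
      have hKu : K u ≤ K r₀ := K_anti.antitoneOn ⟨hr₀pos, hr₀lt1.le⟩
        ⟨lt_of_lt_of_le hr₀pos hu.1, hu.2⟩ hu.1
      have hden : r₀ * (c/2) ≤ u * Real.sqrt (c^2 - K u^2) :=
        mul_le_mul hu.1 (hsub u hum) (by linarith) (hRpos u hum).le
      calc g u ≤ K r₀ / (r₀ * (c/2)) :=
            div_le_div₀ (K_pos hr₀pos).le hKu (mul_pos hr₀pos (by linarith)) hden
        _ = 2 * K r₀ / (r₀ * c) := by
            field_simp
    have hmono := intervalIntegral.integral_mono_on hr₀lt1.le (hgint r₀ 1 m_r₀ m_1)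
      intervalIntegrable_const hpt
    rw [intervalIntegral.integral_const, smul_eq_mul] at hmono
    have hnn : 0 ≤ 2 * K r₀ / (r₀ * c) :=
      div_nonneg (by linarith [K_pos hr₀pos]) (mul_nonneg hr₀pos.le hc0.le)
    calc (∫ R in r₀..(1:ℝ), g R) ≤ (1 - r₀) * (2 * K r₀ / (r₀ * c)) := hmono
      _ ≤ 2 * K r₀ / (r₀ * c) := arith2 hnn hr₀pos.le hr₀lt1.le
  -- upper bound piece 3 : [1, r₁]
  have hU3 : (∫ R in (1:ℝ)..r₁, g R) ≤ (r₁ - 1) * (2 * K r₁ / c) := by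
    have hpt : ∀ u ∈ Set.Icc (1:ℝ) r₁, g u ≤ 2 * K r₁ / c := by
      intro u hu
      have hum : u ∈ Set.Icc ρ P := ⟨le_trans hρ1.le hu.1, le_trans hu.2 hPr₁.le⟩
      have hKu : K u ≤ K r₁ := K_mono.monotoneOn (Set.mem_Ici.mpr hu.1)
        (Set.mem_Ici.mpr (by linarith)) hu.2
      have hden : 1 * (c/2) ≤ u * Real.sqrt (c^2 - K u^2) :=
        mul_le_mul hu.1 (hsub u hum) (by linarith) (hRpos u hum).le
      calc g u ≤ K r₁ / (1 * (c/2)) :=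
            div_le_div₀ (K_pos (by linarith)).le hKu (by linarith) hden
        _ = 2 * K r₁ / c := by field_simp
    have hmono := intervalIntegral.integral_mono_on hr₁gt1.le (hgint 1 r₁ m_1 m_r₁)
      intervalIntegrable_const hpt
    rw [intervalIntegral.integral_const, smul_eq_mul] at hmono
    exact hmono
  -- upper bound piece 4 : [r₁, P]
  have hd₁ : (0:ℝ) < r₁^2 - 1 := by
    rw [show r₁^2 - 1 = 8/ε by rw [hr₁sq]; ring]
    positivity
  have hU4 : (∫ R in r₁..P, g R) ≤ (r₁^2 - 1)⁻¹ * (π/3) := by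
    have hpt : ∀ u ∈ Set.Icc r₁ P, g u ≤ (r₁^2 - 1)⁻¹ * G u := by
      intro u hu
      have hum : u ∈ Set.Icc ρ P := ⟨le_trans (by linarith) hu.1, hu.2⟩
      have h0 := hg0 u hum
      have hle : r₁^2 - 1 ≤ u^2 - 1 := by
        have := pow_le_pow_left₀ (by linarith : (0:ℝ) ≤ r₁) hu.1 2
        linarith
      have := aux_mul_le h0 hd₁ hle
      calc g u ≤ (r₁^2 - 1)⁻¹ * (g u * (u^2 - 1)) := this
        _ = (r₁^2 - 1)⁻¹ * G u := by rw [hGg]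
    have hmono := intervalIntegral.integral_mono_on hPr₁.le (hgint r₁ P m_r₁ m_P)
      ((hGint r₁ P m_r₁ m_P).const_mul _) hpt
    rw [intervalIntegral.integral_const_mul, hFTC r₁ P m_r₁ m_P] at hmono
    have hb : F P - F r₁ ≤ π/3 := by rw [hFP]; linarith [hF0 r₁ m_r₁]
    calc (∫ R in r₁..P, g R) ≤ (r₁^2 - 1)⁻¹ * (F P - F r₁) := hmono
      _ ≤ (r₁^2 - 1)⁻¹ * (π/3) := mul_le_mul_of_nonneg_left hb (inv_pos.mpr hd₁).le
  have hT1 : (1 - r₀^2)⁻¹ * (π/3) ≤ π/3 + ε/4 := numeric1 hr₀pos hr₀half hr₀eps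
  have hT4 : (r₁^2 - 1)⁻¹ * (π/3) ≤ ε/6 := numeric4 hε hr₁sq
  -- assemble
  rw [Real.dist_eq, abs_lt]
  have hsum : (∫ R in ρ..P, g R) = (∫ R in ρ..r₀, g R) + (∫ R in r₀..(1:ℝ), g R)
      + (∫ R in (1:ℝ)..r₁, g R) + (∫ R in r₁..P, g R) := by
    linarith [h1, h2, h3]
  constructor
  · linarith
  · linarith

end parts

theorem stmt_3 (Rm Rp : ℝ → ℝ)
    (hRm : ∀ x : ℝ, 1 < x → 0 < Rm x ∧ Rm x < 1 ∧ K (Rm x) = x)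
    (hRp : ∀ x : ℝ, 1 < x → 1 < Rp x ∧ K (Rp x) = x) :
    Tendsto (fun c : ℝ => ∫ ψ in (π / 3)..(2 * π / 3),
        (1 - (Rm (c * Real.sin ψ)) ^ 2)⁻¹) atTop (nhds (π / 3)) ∧
    Tendsto (fun c : ℝ => ∫ R in (Rm (Real.sqrt 3 / 2 * c))..(Rp (Real.sqrt 3 / 2 * c)),
        K R / (R * Real.sqrt (c ^ 2 - (K R) ^ 2))) atTop (nhds (π / 3)) ∧
    Tendsto (fun c : ℝ => ∫ ψ in (π / 3)..(2 * π / 3),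
        ((Rp (c * Real.sin ψ)) ^ 2 - 1)⁻¹) atTop (nhds 0) :=
  ⟨part1 hRm, part2 hRm hRp, part3 hRp⟩
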